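/- arXiv:1507.01280 — 4 statements merged into one kernel-verified Lean document; each statement's English description precedes it below -/
import Mathlib

section
/- For α > 0, α > β, β ≠ 0, and z ≠ 0, the derivative of the Wright-type function satisfies (d/dz) e_{α,β}^{μ,δ}(z) = -(1/(βz)) [ e_{α,β}^{μ,δ-1}(z) + (1-δ) e_{α,β}^{μ,δ}(z) ]. -/
open Filter Topology

/-- `Γ(x) * x^k ≤ Γ(x + k)` for `x ≥ 2`. -/
private lemma gamma_mul_pow_le {x : ℝ} (hx : 2 ≤ x) (k : ℕ) :
    Real.Gamma x * x ^ k ≤ Real.Gamma (x + k) := by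
  induction k with
  | zero => simp
  | succ k ih =>
    have hx0 : (0:ℝ) < x := lt_of_lt_of_le two_pos hx
    have hk0 : (0:ℝ) ≤ (k:ℝ) := Nat.cast_nonneg k
    have hxk : (0:ℝ) < x + k := by linarith
    have hrec : Real.Gamma (x + ((k:ℕ)+1:ℕ)) = (x + k) * Real.Gamma (x + k) := by
      push_cast
      rw [show x + ((k:ℝ)+1) = (x + (k:ℝ)) + 1 by ring, Real.Gamma_add_one (ne_of_gt hxk)]
    rw [hrec]
    calc Real.Gamma x * x ^ (k+1) = x * (Real.Gamma x * x ^ k) := by ring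
      _ ≤ x * Real.Gamma (x + k) := mul_le_mul_of_nonneg_left ih hx0.le
      _ ≤ (x + k) * Real.Gamma (x + k) :=
          mul_le_mul_of_nonneg_right (by linarith) (Real.Gamma_nonneg_of_nonneg hxk.le)

private lemma one_le_gamma {x : ℝ} (hx : 2 ≤ x) : 1 ≤ Real.Gamma x := by
  have h := Real.Gamma_strictMonoOn_Ici.monotoneOn (Set.mem_Ici.mpr (le_refl (2:ℝ)))
    (Set.mem_Ici.mpr hx) hx
  simpa [Real.Gamma_two] using h

/-- Superexponential growth of Gamma-quotients: eventually
`q ^ n * Γ(b n + e) ≤ Γ(a n + c + (b n + e))`. -/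
private lemma gamma_ratio (a c b e : ℝ) (ha : 0 < a) (hb : 0 < b) {q : ℝ} (hq : 1 ≤ q) :
    ∀ᶠ n : ℕ in atTop,
      q ^ n * Real.Gamma (b * n + e) ≤ Real.Gamma (a * n + c + (b * n + e)) := by
  have hq0 : (0:ℝ) < q := lt_of_lt_of_le one_pos hq
  set t : ℝ := max 2 (q ^ (4 / a)) with ht
  have ht2 : (2:ℝ) ≤ t := le_max_left _ _
  have ht1 : (1:ℝ) ≤ t := le_trans one_le_two ht2
  have hx_t : Tendsto (fun n : ℕ => b * n + e) atTop atTop := by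
    apply tendsto_atTop_add_const_right
    exact Tendsto.const_mul_atTop hb tendsto_natCast_atTop_atTop
  have ha_t : Tendsto (fun n : ℕ => a * n) atTop atTop :=
    Tendsto.const_mul_atTop ha tendsto_natCast_atTop_atTop
  have h1 : ∀ᶠ n : ℕ in atTop, t ≤ b * n + e := hx_t.eventually_ge_atTop t
  have h2 : ∀ᶠ n : ℕ in atTop, 4 ≤ a * n := ha_t.eventually_ge_atTop 4
  have h3 : ∀ᶠ n : ℕ in atTop, -2 * c ≤ a * n := ha_t.eventually_ge_atTop _
  filter_upwards [h1, h2, h3] with n hn1 hn2 hn3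
  set x : ℝ := b * n + e with hxdef
  set k : ℕ := ⌊a * n / 2⌋₊ with hkdef
  have hkle : (k:ℝ) ≤ a * n / 2 := Nat.floor_le (by positivity)
  have hkge : a * n / 4 ≤ (k:ℝ) := by
    have := Nat.sub_one_lt_floor (a * n / 2)
    rw [← hkdef] at this
    linarith
  have hk0 : (0:ℝ) ≤ (k:ℝ) := Nat.cast_nonneg k
  have hx2 : 2 ≤ x := le_trans ht2 hn1
  have hGx : 0 ≤ Real.Gamma x := Real.Gamma_nonneg_of_nonneg (by linarith)
  have step1 : Real.Gamma x * x ^ k ≤ Real.Gamma (x + k) := gamma_mul_pow_le hx2 k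
  have step2 : Real.Gamma (x + k) ≤ Real.Gamma (a * n + c + x) := by
    apply Real.Gamma_strictMonoOn_Ici.monotoneOn
    · exact Set.mem_Ici.mpr (by linarith)
    · exact Set.mem_Ici.mpr (by linarith)
    · linarith
  have hqn : q ^ n ≤ x ^ k := by
    have e1 : (q:ℝ) ^ (n:ℕ) = (q ^ (4/a) : ℝ) ^ (a * n / 4 : ℝ) := by
      rw [← Real.rpow_natCast q n, ← Real.rpow_mul hq0.le]
      congr 1
      field_simp
    have e2 : (q ^ (4/a) : ℝ) ^ (a * n / 4 : ℝ) ≤ t ^ (a * n / 4 : ℝ) := by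
      apply Real.rpow_le_rpow (Real.rpow_nonneg hq0.le _) (le_max_right _ _)
      positivity
    have e3 : (t:ℝ) ^ (a * n / 4 : ℝ) ≤ t ^ ((k:ℕ):ℝ) :=
      Real.rpow_le_rpow_of_exponent_le ht1 hkge
    have e4 : (t:ℝ) ^ ((k:ℕ):ℝ) ≤ x ^ ((k:ℕ):ℝ) :=
      Real.rpow_le_rpow (by linarith) hn1 hk0
    have e5 : (x:ℝ) ^ ((k:ℕ):ℝ) = x ^ k := Real.rpow_natCast x k
    calc q ^ n = (q ^ (4/a) : ℝ) ^ (a * n / 4 : ℝ) := e1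
      _ ≤ t ^ (a * n / 4 : ℝ) := e2
      _ ≤ t ^ ((k:ℕ):ℝ) := e3
      _ ≤ x ^ ((k:ℕ):ℝ) := e4
      _ = x ^ k := e5
  calc q ^ n * Real.Gamma x ≤ x ^ k * Real.Gamma x :=
        mul_le_mul_of_nonneg_right hqn hGx
    _ = Real.Gamma x * x ^ k := by ring
    _ ≤ Real.Gamma (x + k) := step1
    _ ≤ Real.Gamma (a * n + c + x) := step2

/-- Reflection bound: `|1/Γ(s)| ≤ Γ(1-s)/π` for `s < 1`. -/
private lemma abs_one_div_gamma_le {s : ℝ} (hs : s < 1) :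
    |1 / Real.Gamma s| ≤ Real.Gamma (1 - s) / Real.pi := by
  have h1s : 0 < 1 - s := by linarith
  have hG1 : 0 < Real.Gamma (1 - s) := Real.Gamma_pos_of_pos h1s
  have hπ : (0:ℝ) < Real.pi := Real.pi_pos
  rcases eq_or_ne (Real.Gamma s) 0 with h | h
  · rw [h]
    simp only [div_zero, abs_zero]
    positivity
  · have hrefl := Real.Gamma_mul_Gamma_one_sub s
    have hsin : Real.sin (Real.pi * s) ≠ 0 := by
      intro h0
      rw [h0, div_zero] at hrefl
      rcases mul_eq_zero.mp hrefl with h' | h'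
      · exact h h'
      · exact hG1.ne' h'
    rw [eq_div_iff hsin] at hrefl
    have key : 1 / Real.Gamma s = Real.sin (Real.pi * s) * Real.Gamma (1 - s) / Real.pi := by
      field_simp
      linear_combination -hrefl
    rw [key, abs_div, abs_of_pos hπ, abs_mul, abs_of_pos hG1]
    have hsle : |Real.sin (Real.pi * s)| ≤ 1 :=
      abs_le.mpr ⟨Real.neg_one_le_sin _, Real.sin_le_one _⟩
    calc |Real.sin (Real.pi * s)| * Real.Gamma (1 - s) / Real.pi
        ≤ 1 * Real.Gamma (1 - s) / Real.pi := by gcongr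
      _ = Real.Gamma (1 - s) / Real.pi := by rw [one_mul]

/-- The Wright-type function `e_{α,β}^{μ,δ}(z) = Σ_{n=0}^∞ zⁿ/(Γ(αn+μ)Γ(δ-βn))`,
with the convention `1/Γ = 0` at the poles of `Γ` (in Lean, `Complex.Gamma` vanishes
at nonpositive integers and division by zero is zero). -/
noncomputable def wrightE (α β μ δ : ℝ) (z : ℂ) : ℂ :=
  ∑' n : ℕ, z ^ n / (Complex.Gamma ((α * n + μ : ℝ) : ℂ) * Complex.Gamma ((δ - β * n : ℝ) : ℂ))

private noncomputable def wG (α β μ δ : ℝ) (n : ℕ) : ℂ :=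
  Complex.Gamma ((α * n + μ : ℝ) : ℂ) * Complex.Gamma ((δ - β * n : ℝ) : ℂ)

private lemma coeff_bound (α β μ δ : ℝ) (hα : 0 < α) (hβα : β < α) (hβ : β ≠ 0)
    {q : ℝ} (hq : 1 ≤ q) :
    ∀ᶠ n : ℕ in atTop, ‖(1:ℂ) / wG α β μ δ n‖ ≤ (q⁻¹) ^ n := by
  have hq0 : (0:ℝ) < q := lt_of_lt_of_le one_pos hq
  have hnorm : ∀ n : ℕ, ‖(1:ℂ) / wG α β μ δ n‖
      = |1 / (Real.Gamma (α * n + μ) * Real.Gamma (δ - β * n))| := by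
    intro n
    rw [wG, Complex.Gamma_ofReal, Complex.Gamma_ofReal, ← Complex.ofReal_mul,
      ← Complex.ofReal_one, ← Complex.ofReal_div]
    rw [Complex.norm_real, Real.norm_eq_abs]
  have h2 : ∀ᶠ n : ℕ in atTop, 2 ≤ α * n + μ :=
    (tendsto_atTop_add_const_right _ μ
      (Tendsto.const_mul_atTop hα tendsto_natCast_atTop_atTop)).eventually_ge_atTop 2
  rcases lt_or_gt_of_ne hβ with hβneg | hβpos
  · -- β < 0 : both Gamma factors grow
    have hb2 : (0:ℝ) < -β/2 := by linarith
    have E := gamma_ratio (-β/2) 0 (-β/2) δ hb2 hb2 hq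
    have h3 : ∀ᶠ n : ℕ in atTop, 2 ≤ -β/2 * n + δ :=
      (tendsto_atTop_add_const_right _ δ
        (Tendsto.const_mul_atTop hb2 tendsto_natCast_atTop_atTop)).eventually_ge_atTop 2
    filter_upwards [E, h2, h3] with n hnE hn2 hn3
    rw [hnorm]
    have hG1 : 1 ≤ Real.Gamma (α * n + μ) := one_le_gamma hn2
    have hGsmall : 1 ≤ Real.Gamma (-β/2 * n + δ) := one_le_gamma hn3
    have harg : -β/2 * (n:ℝ) + 0 + (-β/2 * n + δ) = δ - β * n := by ring
    rw [harg] at hnE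
    have hqn : (0:ℝ) < q ^ n := pow_pos hq0 n
    have h1pos : 0 < Real.Gamma (α * n + μ) := lt_of_lt_of_le one_pos hG1
    have hG2 : q ^ n ≤ Real.Gamma (δ - β * n) :=
      le_trans (le_mul_of_one_le_right hqn.le hGsmall) hnE
    have hG2pos : 0 < Real.Gamma (δ - β * n) := lt_of_lt_of_le hqn hG2
    have hprod : q ^ n ≤ Real.Gamma (α * n + μ) * Real.Gamma (δ - β * n) :=
      le_trans hG2 (le_mul_of_one_le_left hG2pos.le hG1)
    rw [abs_of_pos (one_div_pos.mpr (mul_pos h1pos hG2pos)), inv_pow, ← one_div]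
    exact one_div_le_one_div_of_le hqn hprod
  · -- β > 0 : use reflection for the second factor
    have hab : 0 < α - β := by linarith
    have E := gamma_ratio (α - β) (μ + δ - 1) β (1 - δ) hab hβpos hq
    have h3 : ∀ᶠ n : ℕ in atTop, δ - β * n < 1 := by
      have hmul := Tendsto.const_mul_atTop hβpos tendsto_natCast_atTop_atTop
      have hneg : Tendsto (fun n : ℕ => -(β * n)) atTop atBot :=
        tendsto_neg_atTop_atBot.comp hmul
      have ht : Tendsto (fun n : ℕ => δ - β * n) atTop atBot :=
        (tendsto_atBot_add_const_left _ δ hneg).congr (fun n => by ring)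
      exact ht.eventually_lt_atBot 1
    filter_upwards [E, h2, h3] with n hnE hn2 hn3
    rw [hnorm]
    have hG1pos : 0 < Real.Gamma (α * n + μ) := Real.Gamma_pos_of_pos (by linarith)
    have harg2 : (α - β) * (n:ℝ) + (μ + δ - 1) + (β * n + (1 - δ)) = α * n + μ := by ring
    have harg3 : β * (n:ℝ) + (1 - δ) = 1 - (δ - β * n) := by ring
    rw [harg3] at harg2
    rw [harg3, harg2] at hnE
    have hrefl : |1 / Real.Gamma (δ - β * n)| ≤ Real.Gamma (1 - (δ - β * n)) / Real.pi :=
      abs_one_div_gamma_le hn3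
    have hGr : 0 < Real.Gamma (1 - (δ - β * n)) := Real.Gamma_pos_of_pos (by linarith)
    have split : |1 / (Real.Gamma (α * n + μ) * Real.Gamma (δ - β * n))|
        = (1 / Real.Gamma (α * n + μ)) * |1 / Real.Gamma (δ - β * n)| := by
      rw [one_div, mul_inv, abs_mul, abs_inv, abs_of_pos hG1pos, one_div, one_div, abs_inv]
    rw [split]
    have hπ : (0:ℝ) < Real.pi := Real.pi_pos
    have hqn : (0:ℝ) < q ^ n := pow_pos hq0 n
    have hdiv : Real.Gamma (1 - (δ - β * n)) / Real.Gamma (α * n + μ) ≤ (q⁻¹) ^ n := by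
      rw [div_le_iff₀ hG1pos, inv_pow]
      have h6 := mul_le_mul_of_nonneg_left hnE (inv_nonneg.mpr hqn.le)
      rw [← mul_assoc, inv_mul_cancel₀ hqn.ne', one_mul] at h6
      exact h6
    calc (1 / Real.Gamma (α * n + μ)) * |1 / Real.Gamma (δ - β * n)|
        ≤ (1 / Real.Gamma (α * n + μ)) * (Real.Gamma (1 - (δ - β * n)) / Real.pi) :=
          mul_le_mul_of_nonneg_left hrefl (by positivity)
      _ = (Real.Gamma (1 - (δ - β * n)) / Real.Gamma (α * n + μ)) / Real.pi := by ring
      _ ≤ (q⁻¹) ^ n / Real.pi := by gcongr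
      _ ≤ (q⁻¹) ^ n := div_le_self (by positivity) (by linarith [Real.pi_gt_three])

private lemma wright_summable (α β μ δ : ℝ) (hα : 0 < α) (hβα : β < α) (hβ : β ≠ 0)
    (r : ℝ) (hr : 0 < r) :
    Summable fun n : ℕ => ((n:ℝ) + 1) * ‖(1:ℂ) / wG α β μ δ n‖ * r ^ n := by
  set q : ℝ := 2 * r + 2 with hqdef
  have hq1 : (1:ℝ) ≤ q := by simp only [hqdef]; linarith
  have hq0 : (0:ℝ) < q := by linarith
  have hb := coeff_bound α β μ δ hα hβα hβ hq1
  have h1 : ‖r / q‖ < 1 := by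
    rw [Real.norm_eq_abs, abs_of_pos (by positivity), div_lt_one hq0]
    linarith
  have hsum : Summable fun n : ℕ => ((n:ℝ) + 1) * (r/q) ^ n := by
    have hs := (summable_pow_mul_geometric_of_norm_lt_one 1 h1).add
      (summable_geometric_of_norm_lt_one h1)
    exact hs.congr fun n => by ring
  apply Summable.of_norm_bounded_eventually hsum
  rw [Nat.cofinite_eq_atTop]
  filter_upwards [hb] with n hn
  have hnn : (0:ℝ) ≤ ((n:ℝ) + 1) * ‖(1:ℂ) / wG α β μ δ n‖ * r ^ n := by positivity
  rw [Real.norm_eq_abs, abs_of_nonneg hnn]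
  have hrw : (r/q) ^ n = (q⁻¹) ^ n * r ^ n := by
    rw [div_eq_mul_inv, mul_pow, mul_comm]
  rw [hrw, show ((n:ℝ) + 1) * ((q⁻¹) ^ n * r ^ n) = ((n:ℝ) + 1) * (q⁻¹) ^ n * r ^ n by ring]
  gcongr

private lemma norm_div_eq (a b : ℂ) : ‖a / b‖ = ‖a‖ * ‖(1:ℂ) / b‖ := by
  rw [norm_div, norm_div, norm_one]
  ring

private lemma one_div_gamma_eq (w : ℂ) :
    1 / Complex.Gamma w = w / Complex.Gamma (w + 1) := by
  rcases eq_or_ne w 0 with hw | hw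
  · simp [hw, Complex.Gamma_zero]
  · rw [Complex.Gamma_add_one w hw]
    rcases eq_or_ne (Complex.Gamma w) 0 with hG | hG
    · simp [hG]
    · field_simp

/-- Differentiation formula (8) for the Wright-type function. -/
theorem wright_deriv (α β μ δ : ℝ) (hα : 0 < α) (hβα : β < α) (hβ : β ≠ 0)
    (z : ℂ) (hz : z ≠ 0) :
    deriv (wrightE α β μ δ) z
      = -(1 / ((β : ℂ) * z)) * (wrightE α β μ (δ - 1) z + (1 - (δ : ℂ)) * wrightE α β μ δ z) := by
  have hβc : ((β:ℝ) : ℂ) ≠ 0 := Complex.ofReal_ne_zero.mpr hβ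
  set R : ℝ := ‖z‖ + 1 with hR
  have hR1 : (1:ℝ) ≤ R := by simp only [hR]; linarith [norm_nonneg z]
  have hR0 : (0:ℝ) < R := by linarith
  have hzR : ‖z‖ < R := by simp only [hR]; linarith
  have hsum := wright_summable α β μ δ hα hβα hβ R hR0
  have hsum' := wright_summable α β μ (δ - 1) hα hβα hβ R hR0
  -- termwise norm bound for the series itself
  have hbound : ∀ (δ' : ℝ) (n : ℕ),
      ‖z ^ n / wG α β μ δ' n‖ ≤ ((n:ℝ) + 1) * ‖(1:ℂ) / wG α β μ δ' n‖ * R ^ n := by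
    intro δ' n
    rw [norm_div_eq, norm_pow]
    have h1 : ‖z‖ ^ n ≤ R ^ n := pow_le_pow_left₀ (norm_nonneg z) hzR.le n
    calc ‖z‖ ^ n * ‖(1:ℂ) / wG α β μ δ' n‖
        ≤ R ^ n * ‖(1:ℂ) / wG α β μ δ' n‖ :=
          mul_le_mul_of_nonneg_right h1 (norm_nonneg _)
      _ = 1 * (‖(1:ℂ) / wG α β μ δ' n‖ * R ^ n) := by ring
      _ ≤ ((n:ℝ) + 1) * (‖(1:ℂ) / wG α β μ δ' n‖ * R ^ n) := by
          refine mul_le_mul_of_nonneg_right ?_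
            (mul_nonneg (norm_nonneg _) (pow_nonneg hR0.le n))
          have : (0:ℝ) ≤ (n:ℝ) := Nat.cast_nonneg n
          linarith
      _ = ((n:ℝ) + 1) * ‖(1:ℂ) / wG α β μ δ' n‖ * R ^ n := by ring
  have hT : Summable fun n : ℕ => z ^ n / wG α β μ δ n :=
    Summable.of_norm_bounded hsum (hbound δ)
  have hT' : Summable fun n : ℕ => z ^ n / wG α β μ (δ - 1) n :=
    Summable.of_norm_bounded hsum' (hbound (δ - 1))
  -- the derivative via termwise differentiation
  have hderiv : HasDerivAt (wrightE α β μ δ)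
      (∑' n : ℕ, (n:ℂ) * z ^ (n - 1) / wG α β μ δ n) z := by
    have main := hasDerivAt_tsum_of_isPreconnected
      (u := fun n : ℕ => ((n:ℝ) + 1) * ‖(1:ℂ) / wG α β μ δ n‖ * R ^ n)
      (g := fun (n : ℕ) (w : ℂ) => w ^ n / wG α β μ δ n)
      (g' := fun (n : ℕ) (w : ℂ) => (n:ℂ) * w ^ (n - 1) / wG α β μ δ n)
      hsum Metric.isOpen_ball (convex_ball (0:ℂ) R).isPreconnected
      (fun n y _ => (hasDerivAt_pow n y).div_const (wG α β μ δ n))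
      (fun n y hy => ?_) (by simp [Metric.mem_ball, hR0] : (0:ℂ) ∈ Metric.ball (0:ℂ) R)
      ?_ (by simpa [Metric.mem_ball, Complex.dist_eq] using hzR)
    · exact main
    · -- derivative bound on the ball
      have hyR : ‖y‖ ≤ R := by
        have := Metric.mem_ball.mp hy
        rw [Complex.dist_eq, sub_zero] at this
        exact this.le
      rw [norm_div_eq, norm_mul, norm_pow, Complex.norm_natCast]
      have h5 : (n:ℝ) * ‖y‖ ^ (n - 1) ≤ ((n:ℝ) + 1) * R ^ n := by
        have hy1 : ‖y‖ ^ (n-1) ≤ R ^ (n-1) := pow_le_pow_left₀ (norm_nonneg y) hyR _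
        have hy2 : R ^ (n-1) ≤ R ^ n := pow_le_pow_right₀ hR1 (Nat.sub_le n 1)
        have hn0 : (0:ℝ) ≤ (n:ℝ) := Nat.cast_nonneg n
        nlinarith [pow_nonneg (norm_nonneg y) (n-1)]
      calc (n:ℝ) * ‖y‖ ^ (n - 1) * ‖(1:ℂ) / wG α β μ δ n‖
          ≤ (((n:ℝ) + 1) * R ^ n) * ‖(1:ℂ) / wG α β μ δ n‖ :=
            mul_le_mul_of_nonneg_right h5 (norm_nonneg _)
        _ = ((n:ℝ) + 1) * ‖(1:ℂ) / wG α β μ δ n‖ * R ^ n := by ring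
    · -- summable at 0
      apply summable_of_ne_finset_zero (s := ({0} : Finset ℕ))
      intro n hn
      simp only [Finset.mem_singleton] at hn
      show (0:ℂ) ^ n / wG α β μ δ n = 0
      rw [zero_pow hn, zero_div]
  rw [hderiv.deriv]
  -- Now the algebraic identity for the right-hand side.
  -- termwise: z^n / wG (δ-1) n = w n * (z^n / wG δ n) with w n = δ - 1 - β n
  have hterm : ∀ n : ℕ, z ^ n / wG α β μ (δ - 1) n
      = ((δ - 1 - β * n : ℝ) : ℂ) * (z ^ n / wG α β μ δ n) := by
    intro n
    have h2 : ((δ - 1 - β * n : ℝ) : ℂ) + 1 = ((δ - β * n : ℝ) : ℂ) := by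
      push_cast; ring
    have h1 := one_div_gamma_eq ((δ - 1 - β * n : ℝ) : ℂ)
    rw [h2] at h1
    have h3 : (Complex.Gamma ((δ - 1 - β * n : ℝ) : ℂ))⁻¹
        = ((δ - 1 - β * n : ℝ) : ℂ) * (Complex.Gamma ((δ - β * n : ℝ) : ℂ))⁻¹ := by
      rw [one_div, div_eq_mul_inv] at h1
      exact h1
    have harg : ((δ - 1) - β * (n:ℝ) : ℝ) = (δ - 1 - β * n : ℝ) := by ring
    rw [wG, wG, harg]
    rw [div_eq_mul_inv, div_eq_mul_inv, mul_inv, mul_inv, h3]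
    ring
  have hE1 : wrightE α β μ (δ - 1) z
      = ∑' n : ℕ, ((δ - 1 - β * n : ℝ) : ℂ) * (z ^ n / wG α β μ δ n) := by
    rw [wrightE]
    exact tsum_congr hterm
  have hE2 : wrightE α β μ δ z = ∑' n : ℕ, z ^ n / wG α β μ δ n := rfl
  have hTw : Summable fun n : ℕ => ((δ - 1 - β * n : ℝ) : ℂ) * (z ^ n / wG α β μ δ n) :=
    hT'.congr hterm
  rw [hE1, hE2, ← tsum_mul_left (a := 1 - (δ:ℂ)),
    ← Summable.tsum_add hTw (hT.mul_left (1 - (δ:ℂ)))]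
  have hcomb : ∀ n : ℕ,
      ((δ - 1 - β * n : ℝ) : ℂ) * (z ^ n / wG α β μ δ n)
        + (1 - (δ:ℂ)) * (z ^ n / wG α β μ δ n)
      = (-(β:ℂ)) * ((n:ℂ) * (z ^ n / wG α β μ δ n)) := by
    intro n
    have : ((δ - 1 - β * n : ℝ) : ℂ) + (1 - (δ:ℂ)) = (-(β:ℂ)) * (n:ℂ) := by
      push_cast; ring
    calc ((δ - 1 - β * n : ℝ) : ℂ) * (z ^ n / wG α β μ δ n)
          + (1 - (δ:ℂ)) * (z ^ n / wG α β μ δ n)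
        = (((δ - 1 - β * n : ℝ) : ℂ) + (1 - (δ:ℂ))) * (z ^ n / wG α β μ δ n) := by ring
      _ = (-(β:ℂ)) * ((n:ℂ) * (z ^ n / wG α β μ δ n)) := by rw [this]; ring
  rw [tsum_congr hcomb, tsum_mul_left]
  rw [show -(1 / ((β:ℂ) * z)) * ((-(β:ℂ)) * ∑' n : ℕ, (n:ℂ) * (z ^ n / wG α β μ δ n))
      = (1/z) * ∑' n : ℕ, (n:ℂ) * (z ^ n / wG α β μ δ n) by
    field_simp]
  rw [← tsum_mul_left]
  apply tsum_congr
  intro n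
  cases n with
  | zero => simp
  | succ k =>
    show ((k+1 : ℕ) : ℂ) * z ^ k / wG α β μ δ (k+1)
        = 1/z * (((k+1 : ℕ) : ℂ) * (z ^ (k+1) / wG α β μ δ (k+1)))
    have h7 : (1:ℂ)/z * (((k+1 : ℕ) : ℂ) * (z ^ (k+1) / wG α β μ δ (k+1)))
        = (z⁻¹ * z) * (((k+1 : ℕ) : ℂ) * z ^ k / wG α β μ δ (k+1)) := by
      rw [one_div, pow_succ]; ring
    rw [h7, inv_mul_cancel₀ hz, one_mul]
end

section
/- Let τ : [0,1] → ℝ be continuous with τ(0) = 0, and let P ∈ C¹ with P(t,s) = P₁(t)·P₂(s) where P₂(1) = 0, P₁ and P₂' continuously differentiable and P₂'(t) ≠ 0 on [0,1]. Then ∫₀¹ τ(t) ∫ₜ¹ τ(s) P₁(t) P₂'(s) ds dt = (1/2)[ (P₁(0)/P₂'(0)) (∫₀¹ τ(s) P₂'(s) ds)² + ∫₀¹ (P₁(t)/P₂'(t))' (∫ₜ¹ τ(s) P₂'(s) ds)² dt ]. -/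
open MeasureTheory intervalIntegral Set

/-- Key integration-by-parts identity used in the uniqueness proof
(computation of `I_{1,2}`). -/
theorem uniqueness_ibp_identity
    (τ P₁ P₂ : ℝ → ℝ)
    (hτ : Continuous τ) (hτ0 : τ 0 = 0)
    (hP₁ : ContDiff ℝ 1 P₁) (hP₂ : ContDiff ℝ 2 P₂)
    (hP₂1 : P₂ 1 = 0)
    (hP₂' : ∀ t ∈ Icc (0:ℝ) 1, deriv P₂ t ≠ 0) :
    ∫ t in (0:ℝ)..1, τ t * ∫ s in t..(1:ℝ), τ s * P₁ t * deriv P₂ s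
      = (1 / 2) * ((P₁ 0 / deriv P₂ 0) * (∫ s in (0:ℝ)..1, τ s * deriv P₂ s) ^ 2
          + ∫ t in (0:ℝ)..1,
              deriv (fun t => P₁ t / deriv P₂ t) t * (∫ s in t..(1:ℝ), τ s * deriv P₂ s) ^ 2) := by
  have hP₂d : ContDiff ℝ 1 (deriv P₂) := by
    have h2 : ContDiff ℝ ((1:ℕ∞) + 1) P₂ := by exact_mod_cast hP₂
    exact_mod_cast (contDiff_succ_iff_deriv.mp h2).2.2
  have hdc : Continuous (deriv P₂) := hP₂d.continuous
  set f : ℝ → ℝ := fun s => τ s * deriv P₂ s with hfdef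
  have hfc : Continuous f := hτ.mul hdc
  set F : ℝ → ℝ := fun t => ∫ s in t..(1:ℝ), f s with hFdef
  have hF : ∀ t : ℝ, HasDerivAt F (-(f t)) t := by
    intro t
    have h1 : HasDerivAt (fun u => ∫ s in (0:ℝ)..u, f s) (f t) t :=
      (intervalIntegral.integral_hasStrictDerivAt_right
        (hfc.intervalIntegrable 0 t)
        hfc.stronglyMeasurable.stronglyMeasurableAtFilter
        hfc.continuousAt).hasDerivAt
    have h2 : HasDerivAt (fun u => (∫ s in (0:ℝ)..1, f s) - ∫ s in (0:ℝ)..u, f s)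
        (-(f t)) t := by
      exact ((hasDerivAt_const t (∫ s in (0:ℝ)..1, f s)).sub h1).congr_deriv (by simp)
    have hEq : F = fun u => (∫ s in (0:ℝ)..1, f s) - ∫ s in (0:ℝ)..u, f s := by
      funext u
      rw [hFdef]
      simp [← intervalIntegral.integral_interval_sub_left
        (hfc.intervalIntegrable 0 1) (hfc.intervalIntegrable 0 u)]
    rw [hEq]
    exact h2
  have hFc : Continuous F := by
    have : Differentiable ℝ F := fun t => (hF t).differentiableAt
    exact this.continuous
  set g : ℝ → ℝ := fun t => P₁ t / deriv P₂ t with hgdef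
  set g' : ℝ → ℝ := fun t =>
    (deriv P₁ t * deriv P₂ t - P₁ t * deriv (deriv P₂) t) / (deriv P₂ t) ^ 2 with hg'def
  have hg : ∀ t : ℝ, deriv P₂ t ≠ 0 → HasDerivAt g (g' t) t := by
    intro t ht
    exact ((hP₁.differentiable one_ne_zero t).hasDerivAt).div
      ((hP₂d.differentiable one_ne_zero t).hasDerivAt) ht
  have huIcc : uIcc (0:ℝ) 1 = Icc (0:ℝ) 1 := uIcc_of_le (by norm_num)
  -- integration by parts
  have hv : ∀ x ∈ uIcc (0:ℝ) 1, HasDerivAt (fun t => F t ^ 2) (2 * F x * (-(f x))) x := by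
    intro x _
    have := (hF x).pow 2
    exact this.congr_deriv (by simp)
  have hu : ∀ x ∈ uIcc (0:ℝ) 1, HasDerivAt g (g' x) x := by
    intro x hx
    exact hg x (hP₂' x (huIcc ▸ hx))
  have hg'int : IntervalIntegrable g' volume 0 1 := by
    apply ContinuousOn.intervalIntegrable
    rw [huIcc]
    apply ContinuousOn.div
    · exact ((hP₁.continuous_deriv le_rfl).mul hdc |>.sub
        (hP₁.continuous.mul (hP₂d.continuous_deriv le_rfl))).continuousOn
    · exact (hdc.pow 2).continuousOn
    · intro x hx
      exact pow_ne_zero 2 (hP₂' x hx)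
  have hv'int : IntervalIntegrable (fun x => 2 * F x * (-(f x))) volume 0 1 := by
    exact ((continuous_const.mul hFc).mul hfc.neg).intervalIntegrable 0 1
  have hibp := intervalIntegral.integral_mul_deriv_eq_deriv_mul hu hv hg'int hv'int
  have hF1 : F 1 = 0 := by simp [hFdef]
  -- rewrite inner integrals
  have hinner : ∀ t : ℝ, (∫ s in t..(1:ℝ), τ s * P₁ t * deriv P₂ s) = P₁ t * F t := by
    intro t
    rw [hFdef, ← intervalIntegral.integral_const_mul]
    apply intervalIntegral.integral_congr
    intro s _
    simp [hfdef]; ring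
  have hF0 : F 0 = ∫ s in (0:ℝ)..1, τ s * deriv P₂ s := rfl
  have step1 : (∫ t in (0:ℝ)..1, τ t * ∫ s in t..(1:ℝ), τ s * P₁ t * deriv P₂ s)
      = ∫ t in (0:ℝ)..1, (-(1/2 : ℝ)) * (g t * (2 * F t * (-(f t)))) := by
    apply intervalIntegral.integral_congr
    intro t ht
    rw [huIcc] at ht
    have hne := hP₂' t ht
    show τ t * (∫ s in t..(1:ℝ), τ s * P₁ t * deriv P₂ s)
      = (-(1/2 : ℝ)) * (g t * (2 * F t * (-(f t))))
    rw [hinner t]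
    simp only [hgdef, hfdef]
    field_simp
  have step2 : (∫ t in (0:ℝ)..1, (-(1/2 : ℝ)) * (g t * (2 * F t * (-(f t)))))
      = (-(1/2 : ℝ)) * ∫ t in (0:ℝ)..1, g t * (2 * F t * (-(f t))) :=
    intervalIntegral.integral_const_mul _ _
  have step3 : (∫ t in (0:ℝ)..1,
      deriv (fun t => P₁ t / deriv P₂ t) t * (∫ s in t..(1:ℝ), τ s * deriv P₂ s) ^ 2)
      = ∫ t in (0:ℝ)..1, g' t * F t ^ 2 := by
    apply intervalIntegral.integral_congr
    intro t ht
    rw [huIcc] at ht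
    have h := (hg t (hP₂' t ht)).deriv
    show deriv (fun t => P₁ t / deriv P₂ t) t * (∫ s in t..(1:ℝ), τ s * deriv P₂ s) ^ 2
      = g' t * F t ^ 2
    rw [h]
  rw [step1, step2, hibp, step3, hF1, hF0]
  ring
end

section
/- Under the hypotheses of the previous identity, if additionally c·(P₁(0)/P₂'(0)) ≤ 0 and c·(P₁(t)/P₂'(t))' ≤ 0 for all t ∈ [0,1] for a real constant c, then c·∫₀¹ τ(t) ∫ₜ¹ τ(s) P₁(t) P₂'(s) ds dt ≤ 0. -/
open MeasureTheory intervalIntegral Set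

/-- Sign condition (30): under the hypotheses of the integration-by-parts identity,
if `c·(P₁(0)/P₂'(0)) ≤ 0` and `c·(P₁/P₂')' ≤ 0` on `[0,1]`, then
`c·∫₀¹ τ(t) ∫ₜ¹ τ(s) P₁(t) P₂'(s) ds dt ≤ 0`. -/
theorem uniqueness_sign_condition
    (τ P₁ P₂ : ℝ → ℝ) (c : ℝ)
    (hτ : Continuous τ) (hτ0 : τ 0 = 0)
    (hP₁ : ContDiff ℝ 1 P₁) (hP₂ : ContDiff ℝ 2 P₂)
    (hP₂1 : P₂ 1 = 0)
    (hP₂' : ∀ t ∈ Icc (0:ℝ) 1, deriv P₂ t ≠ 0)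
    (hc0 : c * (P₁ 0 / deriv P₂ 0) ≤ 0)
    (hc1 : ∀ t ∈ Icc (0:ℝ) 1, c * deriv (fun t => P₁ t / deriv P₂ t) t ≤ 0) :
    c * ∫ t in (0:ℝ)..1, τ t * ∫ s in t..(1:ℝ), τ s * P₁ t * deriv P₂ s ≤ 0 := by
  set g := deriv P₂ with hg_def
  have hgC1 : ContDiff ℝ 1 g := by
    have h2 : ContDiff ℝ ((1:WithTop ℕ∞) + 1) P₂ := by
      convert hP₂ using 2
      exact one_add_one_eq_two
    exact (contDiff_succ_iff_deriv.mp h2).2.2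
  have hgc : Continuous g := hgC1.continuous
  have hg'c : Continuous (deriv g) := hgC1.continuous_deriv le_rfl
  have hP₁c : Continuous P₁ := hP₁.continuous
  have hP₁'c : Continuous (deriv P₁) := hP₁.continuous_deriv le_rfl
  set f : ℝ → ℝ := fun s => τ s * g s with hf_def
  have hfc : Continuous f := hτ.mul hgc
  set G : ℝ → ℝ := fun t => ∫ s in t..(1:ℝ), f s with hG_def
  have hG : ∀ t : ℝ, HasDerivAt G (-(f t)) t := fun t =>
    intervalIntegral.integral_hasDerivAt_left (hfc.intervalIntegrable t 1)
      (hfc.stronglyMeasurableAtFilter _ _) hfc.continuousAt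
  have hGcont : Continuous G := continuous_iff_continuousAt.mpr fun t => (hG t).continuousAt
  have hG1 : G 1 = 0 := by simp [hG_def]
  set H : ℝ → ℝ := fun t => G t * G t with hH_def
  have hH : ∀ t : ℝ, HasDerivAt H ((-(f t)) * G t + G t * (-(f t))) t := fun t =>
    (hG t).mul (hG t)
  set q : ℝ → ℝ := fun t => P₁ t / g t with hq_def
  set q' : ℝ → ℝ := fun t => (deriv P₁ t * g t - P₁ t * deriv g t) / (g t) ^ 2 with hq'_def
  have hq : ∀ t ∈ Icc (0:ℝ) 1, HasDerivAt q (q' t) t := fun t ht =>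
    ((hP₁.differentiable one_ne_zero t).hasDerivAt).div
      ((hgC1.differentiable one_ne_zero t).hasDerivAt) (hP₂' t ht)
  have hq'cont : ContinuousOn q' (Icc (0:ℝ) 1) :=
    ((hP₁'c.mul hgc).sub (hP₁c.mul hg'c)).continuousOn.div
      ((hgc.pow 2).continuousOn) (fun t ht => pow_ne_zero _ (hP₂' t ht))
  have huIcc : uIcc (0:ℝ) 1 = Icc (0:ℝ) 1 := uIcc_of_le zero_le_one
  have key : ∫ x in (0:ℝ)..1, q x * ((-(f x)) * G x + G x * (-(f x)))
      = q 1 * H 1 - q 0 * H 0 - ∫ x in (0:ℝ)..1, q' x * H x := by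
    apply intervalIntegral.integral_mul_deriv_eq_deriv_mul
    · intro x hx; exact hq x (huIcc ▸ hx)
    · intro x _; exact hH x
    · exact (huIcc ▸ hq'cont).intervalIntegrable
    · exact ((hfc.neg.mul hGcont).add (hGcont.mul hfc.neg)).intervalIntegrable 0 1
  have hI : (∫ t in (0:ℝ)..1, τ t * ∫ s in t..(1:ℝ), τ s * P₁ t * g s)
      = q 0 * H 0 / 2 + (1/2) * ∫ x in (0:ℝ)..1, q' x * H x := by
    have e1 : (∫ t in (0:ℝ)..1, τ t * ∫ s in t..(1:ℝ), τ s * P₁ t * g s)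
        = ∫ t in (0:ℝ)..1, (-(1:ℝ)/2) * (q t * ((-(f t)) * G t + G t * (-(f t)))) := by
      apply intervalIntegral.integral_congr
      intro t ht
      rw [huIcc] at ht
      have hgt := hP₂' t ht
      have hinner : (∫ s in t..(1:ℝ), τ s * P₁ t * g s) = P₁ t * G t := by
        calc ∫ s in t..(1:ℝ), τ s * P₁ t * g s
            = ∫ s in t..(1:ℝ), P₁ t * (τ s * g s) := by
              apply intervalIntegral.integral_congr
              intro s _; ring
          _ = P₁ t * G t := by
              rw [hG_def]; exact intervalIntegral.integral_const_mul _ _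
      show τ t * (∫ s in t..(1:ℝ), τ s * P₁ t * g s)
          = -1/2 * (q t * (-f t * G t + G t * -f t))
      rw [hinner]
      simp only [hq_def, hf_def]
      field_simp
      ring
    rw [e1, intervalIntegral.integral_const_mul, key]
    simp only [hH_def, hG1]
    ring
  have hcq0 : c * q 0 ≤ 0 := hc0
  have hH0 : 0 ≤ H 0 := mul_self_nonneg _
  have hterm2 : (∫ x in (0:ℝ)..1, c * (q' x * H x)) ≤ 0 := by
    have hneg : 0 ≤ ∫ x in (0:ℝ)..1, -(c * (q' x * H x)) := by
      apply intervalIntegral.integral_nonneg zero_le_one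
      intro u hu
      have h1 := hc1 u hu
      have h2 : deriv (fun t => P₁ t / g t) u = q' u := (hq u hu).deriv
      rw [h2] at h1
      have hHu : 0 ≤ H u := mul_self_nonneg _
      nlinarith
    rw [intervalIntegral.integral_neg] at hneg
    linarith
  rw [intervalIntegral.integral_const_mul] at hterm2
  rw [hI]
  nlinarith
end

section
/- Let 0 < β < 1 and F : [0,1] → ℝ be continuously differentiable. If τ : [0,1] → ℝ is continuous and satisfies the generalized Abel integral equation ∫₀ᵗ τ(η)(t-η)^{-β} dη = F(t) for all t ∈ [0,1], then τ(t) = (sin(βπ)/π)[F(0)·t^{β-1} + ∫₀ᵗ F'(z)(t-z)^{β-1} dz] for t ∈ (0,1]. -/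
open MeasureTheory intervalIntegral Set Real

namespace AbelAux

lemma m_rpow (c : ℝ) : Measurable fun x : ℝ => x ^ c := by
  apply measurable_of_continuousOn_compl_singleton (0:ℝ)
  intro x hx
  exact (Real.continuousAt_rpow_const x c (Or.inl hx)).continuousWithinAt

lemma rpow_int {q : ℝ} (hq : -1 < q) (a t : ℝ) :
    ∫ z in a..t, (t - z) ^ q = (t - a) ^ (q + 1) / (q + 1) := by
  rw [show (∫ z in a..t, (t - z) ^ q) = ∫ z in a..t, (fun x => x ^ q) (t - z) from rfl,
    intervalIntegral.integral_comp_sub_left (fun x => x ^ q) t, sub_self,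
    integral_rpow (Or.inl hq), Real.zero_rpow (by linarith : (0:ℝ) < q + 1).ne', sub_zero]

lemma rpow_int' {q : ℝ} (hq : -1 < q) (a t : ℝ) :
    ∫ z in a..t, (z - a) ^ q = (t - a) ^ (q + 1) / (q + 1) := by
  rw [show (∫ z in a..t, (z - a) ^ q) = ∫ z in a..t, (fun x => x ^ q) (z - a) from rfl,
    intervalIntegral.integral_comp_sub_right (fun x => x ^ q) a, sub_self,
    integral_rpow (Or.inl hq), Real.zero_rpow (by linarith : (0:ℝ) < q + 1).ne', sub_zero]

lemma ii_sub_left {q : ℝ} (hq : -1 < q) (c a b : ℝ) :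
    IntervalIntegrable (fun z => (c - z) ^ q) volume a b := by
  have h := (intervalIntegral.intervalIntegrable_rpow' (a := c - a) (b := c - b) hq).comp_sub_left c
  simpa using h

lemma ii_sub_right {q : ℝ} (hq : -1 < q) (c a b : ℝ) :
    IntervalIntegrable (fun z => (z - c) ^ q) volume a b := by
  have h := (intervalIntegral.intervalIntegrable_rpow' (a := a - c) (b := b - c) hq).comp_sub_right c
  simpa using h

lemma inter1 {t z : ℝ} (hzt : z ≤ t) : Ioc 0 t ∩ Iio z = Ioo 0 z := by
  ext x
  simp only [mem_inter_iff, mem_Ioc, mem_Iio, mem_Ioo]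
  constructor
  · rintro ⟨⟨h1, _⟩, h3⟩; exact ⟨h1, h3⟩
  · rintro ⟨h1, h3⟩; exact ⟨⟨h1, h3.le.trans hzt⟩, h3⟩

lemma inter2 {t η : ℝ} (hη : 0 < η) : Ioc 0 t ∩ Ioi η = Ioc η t := by
  ext x
  simp only [mem_inter_iff, mem_Ioc, mem_Ioi]
  constructor
  · rintro ⟨⟨_, h2⟩, h3⟩; exact ⟨h3, h2⟩
  · rintro ⟨h1, h2⟩; exact ⟨⟨hη.trans h1, h2⟩, h1⟩

lemma beta_val {β : ℝ} (h0 : 0 < β) (h1 : β < 1) :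
    ∫ u in (0:ℝ)..1, u ^ (-β) * (1 - u) ^ (β - 1) = π / Real.sin (π * β) := by
  have h2 : (0:ℝ) < 1 - β := by linarith
  have key := Complex.Gamma_mul_Gamma_eq_betaIntegral
    (s := ((1 - β : ℝ) : ℂ)) (t := ((β : ℝ) : ℂ)) (by simpa using h2) (by simpa using h0)
  have hsum : ((1 - β : ℝ) : ℂ) + ((β : ℝ) : ℂ) = 1 := by push_cast; ring
  rw [hsum, Complex.Gamma_one, one_mul] at key
  have hbeta : Complex.betaIntegral ((1 - β : ℝ) : ℂ) ((β : ℝ) : ℂ)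
      = ((∫ u in (0:ℝ)..1, u ^ (-β) * (1 - u) ^ (β - 1) : ℝ) : ℂ) := by
    rw [Complex.betaIntegral, ← intervalIntegral.integral_ofReal]
    apply intervalIntegral.integral_congr
    intro x hx
    rw [uIcc_of_le (zero_le_one : (0:ℝ) ≤ 1)] at hx
    have hx0 : (0:ℝ) ≤ x := hx.1
    have hx1 : (0:ℝ) ≤ 1 - x := by linarith [hx.2]
    push_cast
    rw [Complex.ofReal_cpow hx0, Complex.ofReal_cpow hx1]
    push_cast
    have e1 : (1 - (β:ℂ) - 1) = -(β:ℂ) := by ring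
    rw [e1]
  rw [hbeta, Complex.Gamma_ofReal, Complex.Gamma_ofReal, ← Complex.ofReal_mul] at key
  have := Complex.ofReal_inj.mp key.symm
  rw [this, mul_comm, Real.Gamma_mul_Gamma_one_sub]

lemma kernel_int {β : ℝ} (h0 : 0 < β) (h1 : β < 1) {a t : ℝ} (hat : a < t) :
    ∫ z in a..t, (t - z) ^ (β - 1) * (z - a) ^ (-β) = π / Real.sin (π * β) := by
  have hpos : (0:ℝ) < t - a := sub_pos.2 hat
  have hc : t - a ≠ 0 := hpos.ne'
  have hsub := intervalIntegral.integral_comp_mul_add (a := 0) (b := 1)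
      (fun z => (t - z) ^ (β - 1) * (z - a) ^ (-β)) hc a
  simp only [mul_zero, zero_add, mul_one, sub_add_cancel, smul_eq_mul] at hsub
  have hlhs : (∫ x in (0:ℝ)..1, (fun z => (t - z) ^ (β - 1) * (z - a) ^ (-β)) ((t - a) * x + a))
      = (t - a)⁻¹ * ∫ u in (0:ℝ)..1, u ^ (-β) * (1 - u) ^ (β - 1) := by
    rw [← intervalIntegral.integral_const_mul]
    apply intervalIntegral.integral_congr
    intro x hx
    rw [uIcc_of_le (zero_le_one : (0:ℝ) ≤ 1)] at hx
    have hx0 : (0:ℝ) ≤ x := hx.1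
    have hx1 : (0:ℝ) ≤ 1 - x := by linarith [hx.2]
    have e1 : t - ((t - a) * x + a) = (t - a) * (1 - x) := by ring
    have e2 : (t - a) * x + a - a = (t - a) * x := by ring
    simp only [e1, e2]
    rw [Real.mul_rpow hpos.le hx1, Real.mul_rpow hpos.le hx0]
    have e3 : (t - a) ^ (β - 1) * (t - a) ^ (-β) = (t - a)⁻¹ := by
      rw [← Real.rpow_add hpos, show β - 1 + -β = -1 by ring, Real.rpow_neg_one]
    calc (t - a) ^ (β - 1) * (1 - x) ^ (β - 1) * ((t - a) ^ (-β) * x ^ (-β))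
        = ((t - a) ^ (β - 1) * (t - a) ^ (-β)) * (x ^ (-β) * (1 - x) ^ (β - 1)) := by ring
      _ = (t - a)⁻¹ * (x ^ (-β) * (1 - x) ^ (β - 1)) := by rw [e3]
  rw [hlhs, beta_val h0 h1] at hsub
  have := mul_left_cancel₀ (inv_ne_zero hc) hsub
  exact this.symm

lemma master_integrable {t p q : ℝ} (ht : 0 < t) (hp : -1 < p) (hq : -1 < q)
    {u : ℝ → ℝ} (hu : Continuous u) :
    Integrable (fun P : ℝ × ℝ => if P.2 < P.1 then u P.2 * ((t - P.1) ^ p * (P.1 - P.2) ^ q) else 0)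
      ((volume.restrict (Ioc 0 t)).prod (volume.restrict (Ioc 0 t))) := by
  obtain ⟨M, hM⟩ := isCompact_Icc.exists_bound_of_continuousOn
    (hu.continuousOn : ContinuousOn u (Icc (0:ℝ) t))
  have hM0 : 0 ≤ M := le_trans (norm_nonneg _) (hM 0 (left_mem_Icc.2 ht.le))
  have hq1 : (0:ℝ) < q + 1 := by linarith
  have hmeas : Measurable (fun P : ℝ × ℝ =>
      if P.2 < P.1 then u P.2 * ((t - P.1) ^ p * (P.1 - P.2) ^ q) else 0) := by
    refine Measurable.ite (measurableSet_lt measurable_snd measurable_fst) ?_ measurable_const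
    exact (hu.measurable.comp measurable_snd).mul
      (((m_rpow p).comp (measurable_const.sub measurable_fst)).mul
        ((m_rpow q).comp (measurable_fst.sub measurable_snd)))
  have hdom : ∀ z ∈ Ioc (0:ℝ) t,
      Integrable ((Iio z).indicator (fun η => (M * (t - z) ^ p) * (z - η) ^ q))
        (volume.restrict (Ioc 0 t)) := by
    intro z hz
    rw [MeasureTheory.integrable_indicator_iff measurableSet_Iio, IntegrableOn,
      Measure.restrict_restrict measurableSet_Iio, inter_comm, inter1 hz.2]
    exact ((ii_sub_left hq z 0 z).1.mono_set Ioo_subset_Ioc_self).const_mul _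
  have hptbd : ∀ z ∈ Ioc (0:ℝ) t, ∀ η ∈ Ioc (0:ℝ) t,
      ‖if η < z then u η * ((t - z) ^ p * (z - η) ^ q) else 0‖
        ≤ (Iio z).indicator (fun η => (M * (t - z) ^ p) * (z - η) ^ q) η := by
    intro z hz η hη
    by_cases hlt : η < z
    · rw [if_pos hlt, Set.indicator_of_mem (mem_Iio.2 hlt)]
      have hnn : (0:ℝ) ≤ (t - z) ^ p * (z - η) ^ q :=
        mul_nonneg (Real.rpow_nonneg (by linarith [hz.2]) _)
          (Real.rpow_nonneg (by linarith) _)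
      rw [norm_mul, Real.norm_of_nonneg hnn]
      calc ‖u η‖ * ((t - z) ^ p * (z - η) ^ q)
          ≤ M * ((t - z) ^ p * (z - η) ^ q) :=
            mul_le_mul_of_nonneg_right (hM η ⟨hη.1.le, hη.2⟩) hnn
        _ = (M * (t - z) ^ p) * (z - η) ^ q := by ring
    · rw [if_neg hlt, Set.indicator_of_notMem (by simpa using hlt)]
      simp
  rw [MeasureTheory.integrable_prod_iff hmeas.aestronglyMeasurable]
  constructor
  · filter_upwards [ae_restrict_mem measurableSet_Ioc] with z hz
    refine Integrable.mono' (hdom z hz) ?_ ?_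
    · have hm : Measurable fun η : ℝ => if η < z then u η * ((t - z) ^ p * (z - η) ^ q) else 0 := by
        refine Measurable.ite (measurableSet_Iio (a := z)) ?_ measurable_const
        exact hu.measurable.mul (measurable_const.mul ((m_rpow q).comp
          ((measurable_const (a := z)).sub measurable_id)))
      exact hm.aestronglyMeasurable
    · filter_upwards [ae_restrict_mem measurableSet_Ioc] with η hη
      exact hptbd z hz η hη
  · refine Integrable.mono'
      (g := fun z => (M * (t ^ (q + 1) / (q + 1))) * (t - z) ^ p) ?_ ?_ ?_
    · exact ((ii_sub_left hp t 0 t).1.const_mul _)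
    · exact hmeas.aestronglyMeasurable.norm.integral_prod_right'
    · filter_upwards [ae_restrict_mem measurableSet_Ioc] with z hz
      rw [Real.norm_of_nonneg (integral_nonneg fun _ => norm_nonneg _)]
      have hb : (∫ η in Ioc (0:ℝ) t, ‖if η < z then u η * ((t - z) ^ p * (z - η) ^ q) else 0‖)
          ≤ ∫ η in Ioc (0:ℝ) t,
              (Iio z).indicator (fun η => (M * (t - z) ^ p) * (z - η) ^ q) η := by
        refine integral_mono_of_nonneg (Filter.Eventually.of_forall fun _ => norm_nonneg _)
          (hdom z hz) ?_
        filter_upwards [ae_restrict_mem measurableSet_Ioc] with η hη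
        exact hptbd z hz η hη
      have hcomp : (∫ η in Ioc (0:ℝ) t,
            (Iio z).indicator (fun η => (M * (t - z) ^ p) * (z - η) ^ q) η)
          = (M * (t - z) ^ p) * (z ^ (q + 1) / (q + 1)) := by
        rw [MeasureTheory.setIntegral_indicator measurableSet_Iio, inter1 hz.2,
          ← MeasureTheory.integral_Ioc_eq_integral_Ioo,
          ← intervalIntegral.integral_of_le hz.1.le,
          intervalIntegral.integral_const_mul, rpow_int hq 0 z, sub_zero]
      have hnn2 : (0:ℝ) ≤ (t - z) ^ p := Real.rpow_nonneg (by linarith [hz.2]) _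
      have hzt : z ^ (q + 1) ≤ t ^ (q + 1) := Real.rpow_le_rpow hz.1.le hz.2 hq1.le
      calc (∫ η in Ioc (0:ℝ) t, ‖if η < z then u η * ((t - z) ^ p * (z - η) ^ q) else 0‖)
          ≤ (M * (t - z) ^ p) * (z ^ (q + 1) / (q + 1)) := by rw [← hcomp]; exact hb
        _ ≤ (M * (t ^ (q + 1) / (q + 1))) * (t - z) ^ p := by
            rw [show (M * (t ^ (q + 1) / (q + 1))) * (t - z) ^ p
                = (M * (t - z) ^ p) * (t ^ (q + 1) / (q + 1)) from by ring]
            gcongr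

lemma slice_left {t : ℝ} (f : ℝ → ℝ → ℝ) {z : ℝ} (hz : z ∈ Ioc (0:ℝ) t) :
    ∫ η in (0:ℝ)..z, f z η
      = ∫ η in Ioc (0:ℝ) t, (if η < z then f z η else 0) := by
  have h1 : (fun η => if η < z then f z η else 0) = (Iio z).indicator (f z) := by
    ext η; simp [Set.indicator_apply]
  rw [h1, MeasureTheory.setIntegral_indicator measurableSet_Iio, inter1 hz.2,
    intervalIntegral.integral_of_le hz.1.le, MeasureTheory.integral_Ioc_eq_integral_Ioo]

lemma slice_right {t : ℝ} (ht : 0 < t) (f : ℝ → ℝ → ℝ) {η : ℝ} (hη : η ∈ Ioc (0:ℝ) t) :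
    ∫ z in η..t, f z η
      = ∫ z in Ioc (0:ℝ) t, (if η < z then f z η else 0) := by
  have h1 : (fun z => if η < z then f z η else 0) = (Ioi η).indicator (fun z => f z η) := by
    ext z; simp [Set.indicator_apply]
  rw [h1, MeasureTheory.setIntegral_indicator measurableSet_Ioi, inter2 hη.1,
    intervalIntegral.integral_of_le hη.2]

lemma triangle_swap {t : ℝ} (ht : 0 < t) {f : ℝ → ℝ → ℝ}
    (hint : Integrable (fun P : ℝ × ℝ => if P.2 < P.1 then f P.1 P.2 else 0)
      ((volume.restrict (Ioc 0 t)).prod (volume.restrict (Ioc 0 t)))) :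
    ∫ z in (0:ℝ)..t, (∫ η in (0:ℝ)..z, f z η)
      = ∫ η in (0:ℝ)..t, (∫ z in η..t, f z η) := by
  rw [intervalIntegral.integral_of_le ht.le, intervalIntegral.integral_of_le ht.le]
  calc ∫ z in Ioc (0:ℝ) t, ∫ η in (0:ℝ)..z, f z η
      = ∫ z in Ioc (0:ℝ) t, ∫ η in Ioc (0:ℝ) t, (if η < z then f z η else 0) :=
        MeasureTheory.setIntegral_congr_fun measurableSet_Ioc fun z hz => slice_left f hz
    _ = ∫ η in Ioc (0:ℝ) t, ∫ z in Ioc (0:ℝ) t, (if η < z then f z η else 0) :=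
        MeasureTheory.integral_integral_swap hint
    _ = ∫ η in Ioc (0:ℝ) t, ∫ z in η..t, f z η :=
        MeasureTheory.setIntegral_congr_fun measurableSet_Ioc
          fun η hη => (slice_right ht f hη).symm

lemma triangle_integrable {t : ℝ} (ht : 0 < t) {f : ℝ → ℝ → ℝ}
    (hint : Integrable (fun P : ℝ × ℝ => if P.2 < P.1 then f P.1 P.2 else 0)
      ((volume.restrict (Ioc 0 t)).prod (volume.restrict (Ioc 0 t)))) :
    IntegrableOn (fun z => ∫ η in (0:ℝ)..z, f z η) (Ioc 0 t) volume := by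
  have h1 := hint.integral_prod_left
  refine h1.congr ?_
  filter_upwards [ae_restrict_mem measurableSet_Ioc] with z hz
  exact (slice_left f hz).symm

lemma lemma1 {β : ℝ} (h0 : 0 < β) (h1 : β < 1) {F τ : ℝ → ℝ} (hτ : Continuous τ)
    (habel : ∀ s ∈ Icc (0:ℝ) 1, ∫ η in (0:ℝ)..s, τ η * (s - η) ^ (-β) = F s)
    {t : ℝ} (ht : t ∈ Ioc (0:ℝ) 1) :
    ∫ z in (0:ℝ)..t, F z * (t - z) ^ (β - 1)
      = (π / Real.sin (π * β)) * ∫ η in (0:ℝ)..t, τ η := by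
  set f : ℝ → ℝ → ℝ := fun z η => τ η * ((t - z) ^ (β - 1) * (z - η) ^ (-β)) with hf
  have hint := master_integrable (u := τ) (p := β - 1) (q := -β) ht.1
    (by linarith) (by linarith) hτ
  have hswap := triangle_swap ht.1 (f := f) hint
  have hL : ∫ z in (0:ℝ)..t, F z * (t - z) ^ (β - 1)
      = ∫ z in (0:ℝ)..t, ∫ η in (0:ℝ)..z, f z η := by
    refine intervalIntegral.integral_congr fun z hz => ?_
    rw [uIcc_of_le ht.1.le] at hz
    have hz1 : z ∈ Icc (0:ℝ) 1 := ⟨hz.1, hz.2.trans ht.2⟩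
    rw [← habel z hz1, ← intervalIntegral.integral_mul_const]
    refine intervalIntegral.integral_congr fun η _ => ?_
    simp only [hf]; ring
  have hR : ∫ η in (0:ℝ)..t, (∫ z in η..t, f z η)
      = ∫ η in (0:ℝ)..t, τ η * (π / Real.sin (π * β)) := by
    refine intervalIntegral.integral_congr_ae ?_
    filter_upwards [compl_mem_ae_iff.2 (measure_singleton t)] with η hne hmem
    rw [uIoc_of_le ht.1.le] at hmem
    have hηt : η < t := lt_of_le_of_ne hmem.2 hne
    have : ∫ z in η..t, f z η = τ η * ∫ z in η..t, ((t - z) ^ (β - 1) * (z - η) ^ (-β)) := by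
      rw [← intervalIntegral.integral_const_mul]
    rw [this, kernel_int h0 h1 hηt]
  rw [hL, hswap, hR, intervalIntegral.integral_mul_const]
  ring

lemma lemma2 {β : ℝ} (h0 : 0 < β) (h1 : β < 1) {F : ℝ → ℝ} (hF : ContDiff ℝ 1 F)
    {t : ℝ} (ht : 0 < t) :
    ∫ z in (0:ℝ)..t, F z * (t - z) ^ (β - 1)
      = F 0 * (t ^ β / β) + ∫ w in (0:ℝ)..t, deriv F w * ((t - w) ^ β / β) := by
  have hder : Continuous (deriv F) := hF.continuous_deriv le_rfl
  have hftc : ∀ z : ℝ, F z = F 0 + ∫ w in (0:ℝ)..z, deriv F w := by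
    intro z
    have h := intervalIntegral.integral_deriv_eq_sub (f := F) (a := 0) (b := z)
      (fun x _ => (hF.differentiable one_ne_zero).differentiableAt) (hder.intervalIntegrable _ _)
    linarith
  set f : ℝ → ℝ → ℝ := fun z w => deriv F w * ((t - z) ^ (β - 1) * (z - w) ^ (0:ℝ)) with hf
  have hint := master_integrable (u := deriv F) (p := β - 1) (q := 0) ht
    (by linarith) (by norm_num) hder
  have hswap := triangle_swap ht (f := f) hint
  have hinner : ∀ z : ℝ, (∫ w in (0:ℝ)..z, f z w)
      = (∫ w in (0:ℝ)..z, deriv F w) * (t - z) ^ (β - 1) := by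
    intro z
    rw [← intervalIntegral.integral_mul_const]
    refine intervalIntegral.integral_congr fun w _ => ?_
    simp only [hf, Real.rpow_zero]; ring
  have hA : IntervalIntegrable (fun z => F 0 * (t - z) ^ (β - 1)) volume 0 t :=
    (ii_sub_left (by linarith) t 0 t).const_mul _
  have hB : IntervalIntegrable (fun z => ∫ w in (0:ℝ)..z, f z w) volume 0 t := by
    rw [intervalIntegrable_iff_integrableOn_Ioc_of_le ht.le]
    exact triangle_integrable ht hint
  have hL : ∫ z in (0:ℝ)..t, F z * (t - z) ^ (β - 1)
      = ∫ z in (0:ℝ)..t, (F 0 * (t - z) ^ (β - 1) + ∫ w in (0:ℝ)..z, f z w) := by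
    refine intervalIntegral.integral_congr fun z _ => ?_
    rw [hinner z, hftc z]; ring
  rw [hL, intervalIntegral.integral_add hA hB, intervalIntegral.integral_const_mul,
    rpow_int (by linarith : (-1:ℝ) < β - 1) 0 t, hswap]
  have hR : ∫ w in (0:ℝ)..t, (∫ z in w..t, f z w)
      = ∫ w in (0:ℝ)..t, deriv F w * ((t - w) ^ β / β) := by
    refine intervalIntegral.integral_congr_ae ?_
    filter_upwards [compl_mem_ae_iff.2 (measure_singleton t)] with w _ _
    have : ∫ z in w..t, f z w = deriv F w * ∫ z in w..t, (t - z) ^ (β - 1) := by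
      rw [← intervalIntegral.integral_const_mul]
      refine intervalIntegral.integral_congr fun z _ => ?_
      simp only [hf, Real.rpow_zero]; ring
    rw [this, rpow_int (by linarith : (-1:ℝ) < β - 1) w t]
    norm_num
  rw [hR, sub_zero]
  norm_num

lemma lemma3 {β : ℝ} (h0 : 0 < β) (h1 : β < 1) {F : ℝ → ℝ} (hF : ContDiff ℝ 1 F)
    {t : ℝ} (ht : 0 < t) :
    ∫ s in (0:ℝ)..t, (F 0 * s ^ (β - 1) + ∫ z in (0:ℝ)..s, deriv F z * (s - z) ^ (β - 1))
      = F 0 * (t ^ β / β) + ∫ w in (0:ℝ)..t, deriv F w * ((t - w) ^ β / β) := by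
  have hder : Continuous (deriv F) := hF.continuous_deriv le_rfl
  set f : ℝ → ℝ → ℝ := fun s z => deriv F z * ((t - s) ^ (0:ℝ) * (s - z) ^ (β - 1)) with hf
  have hint := master_integrable (u := deriv F) (p := 0) (q := β - 1) ht
    (by norm_num) (by linarith) hder
  have hswap := triangle_swap ht (f := f) hint
  have hinner : ∀ s : ℝ, (∫ z in (0:ℝ)..s, f s z)
      = ∫ z in (0:ℝ)..s, deriv F z * (s - z) ^ (β - 1) := by
    intro s
    refine intervalIntegral.integral_congr fun z _ => ?_
    simp only [hf, Real.rpow_zero]; ring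
  have hA : IntervalIntegrable (fun s => F 0 * s ^ (β - 1)) volume 0 t :=
    (intervalIntegral.intervalIntegrable_rpow' (by linarith)).const_mul _
  have hB : IntervalIntegrable (fun s => ∫ z in (0:ℝ)..s, deriv F z * (s - z) ^ (β - 1))
      volume 0 t := by
    rw [intervalIntegrable_iff_integrableOn_Ioc_of_le ht.le]
    exact (triangle_integrable ht hint).congr_fun (fun s _ => hinner s) measurableSet_Ioc
  rw [intervalIntegral.integral_add hA hB, intervalIntegral.integral_const_mul,
    integral_rpow (Or.inl (by linarith : (-1:ℝ) < β - 1))]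
  have hswap' : ∫ s in (0:ℝ)..t, (∫ z in (0:ℝ)..s, deriv F z * (s - z) ^ (β - 1))
      = ∫ z in (0:ℝ)..t, (∫ s in z..t, f s z) := by
    rw [← hswap]
    exact intervalIntegral.integral_congr fun s _ => (hinner s).symm
  have hR : ∫ z in (0:ℝ)..t, (∫ s in z..t, f s z)
      = ∫ z in (0:ℝ)..t, deriv F z * ((t - z) ^ β / β) := by
    refine intervalIntegral.integral_congr fun z _ => ?_
    have : ∫ s in z..t, f s z = deriv F z * ∫ s in z..t, (s - z) ^ (β - 1) := by
      rw [← intervalIntegral.integral_const_mul]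
      refine intervalIntegral.integral_congr fun s _ => ?_
      simp only [hf, Real.rpow_zero]; ring
    rw [this, rpow_int' (by linarith : (-1:ℝ) < β - 1) z t]
    norm_num
  rw [hswap', hR]
  rw [Real.zero_rpow (by linarith : β - 1 + 1 ≠ 0)]
  norm_num

lemma J_cont {β : ℝ} (h0 : 0 < β) (h1 : β < 1) {F : ℝ → ℝ} (hF : ContDiff ℝ 1 F) :
    ContinuousOn (fun s => ∫ z in (0:ℝ)..s, deriv F z * (s - z) ^ (β - 1)) (Ioi (0:ℝ)) := by
  have hder : Continuous (deriv F) := hF.continuous_deriv le_rfl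
  intro s0 hs0
  have hs0' : (0:ℝ) < s0 := hs0
  obtain ⟨M, hM⟩ := isCompact_Icc.exists_bound_of_continuousOn
    (hder.continuousOn : ContinuousOn (deriv F) (Icc (-(|s0| + 1)) (|s0| + 1)))
  have hK : ContinuousAt (fun s => ∫ v in (0:ℝ)..1, deriv F (s * v) * (1 - v) ^ (β - 1)) s0 := by
    apply intervalIntegral.continuousAt_of_dominated_interval
      (bound := fun v => M * (1 - v) ^ (β - 1))
    · refine Filter.Eventually.of_forall fun s => ?_
      exact (((hder.comp (continuous_const.mul continuous_id)).measurable).mul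
        ((m_rpow (β - 1)).comp (measurable_const.sub measurable_id))).aestronglyMeasurable
    · filter_upwards [Metric.ball_mem_nhds s0 one_pos] with s hs
      refine Filter.Eventually.of_forall fun v hv => ?_
      rw [uIoc_of_le zero_le_one] at hv
      have hv1 : (0:ℝ) ≤ 1 - v := by linarith [hv.2]
      have habs : |s * v| ≤ |s0| + 1 := by
        rw [abs_mul]
        have h1 : |s| ≤ |s0| + 1 := by
          have := abs_sub_abs_le_abs_sub s s0
          have h2 : |s - s0| < 1 := by simpa [Real.dist_eq] using hs
          linarith
        have h2 : |v| ≤ 1 := by rw [abs_le]; constructor <;> linarith [hv.1, hv.2]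
        calc |s| * |v| ≤ (|s0| + 1) * 1 :=
          mul_le_mul h1 h2 (abs_nonneg _) (by positivity)
        _ = |s0| + 1 := by ring
      have hmem : s * v ∈ Icc (-(|s0| + 1)) (|s0| + 1) := by
        rw [mem_Icc, ← abs_le]; exact habs
      rw [norm_mul, Real.norm_of_nonneg (Real.rpow_nonneg hv1 _)]
      exact mul_le_mul_of_nonneg_right (hM _ hmem) (Real.rpow_nonneg hv1 _)
    · exact (ii_sub_left (by linarith : (-1:ℝ) < β - 1) 1 0 1).const_mul M
    · refine Filter.Eventually.of_forall fun v _ => ?_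
      exact ((hder.comp (continuous_id.mul continuous_const)).continuousAt).mul
        continuousAt_const
  have heq : ∀ s : ℝ, 0 < s → (∫ z in (0:ℝ)..s, deriv F z * (s - z) ^ (β - 1))
      = s ^ β * ∫ v in (0:ℝ)..1, deriv F (s * v) * (1 - v) ^ (β - 1) := by
    intro s hs
    have hsub := intervalIntegral.integral_comp_mul_left (a := 0) (b := 1)
      (f := fun z => deriv F z * (s - z) ^ (β - 1)) (c := s) hs.ne'
    simp only [mul_zero, mul_one, smul_eq_mul] at hsub
    have hlhs : (∫ v in (0:ℝ)..1, deriv F (s * v) * (s - s * v) ^ (β - 1))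
        = s ^ (β - 1) * ∫ v in (0:ℝ)..1, deriv F (s * v) * (1 - v) ^ (β - 1) := by
      rw [← intervalIntegral.integral_const_mul]
      refine intervalIntegral.integral_congr fun v hv => ?_
      rw [uIcc_of_le zero_le_one] at hv
      have e1 : s - s * v = s * (1 - v) := by ring
      rw [e1, Real.mul_rpow hs.le (by linarith [hv.2] : (0:ℝ) ≤ 1 - v)]
      ring
    rw [hlhs] at hsub
    have h2 : (∫ z in (0:ℝ)..s, deriv F z * (s - z) ^ (β - 1))
        = s * (s ^ (β - 1) * ∫ v in (0:ℝ)..1, deriv F (s * v) * (1 - v) ^ (β - 1)) := by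
      rw [hsub]
      field_simp
    have hss : s ^ β = s * s ^ (β - 1) := by
      nth_rewrite 1 [show β = 1 + (β - 1) by ring]
      rw [Real.rpow_add hs, Real.rpow_one]
    rw [h2, hss]; ring
  have hc : ContinuousAt
      (fun s => s ^ β * ∫ v in (0:ℝ)..1, deriv F (s * v) * (1 - v) ^ (β - 1)) s0 :=
    (Real.continuousAt_rpow_const s0 β (Or.inl hs0'.ne')).mul hK
  refine (hc.congr ?_).continuousWithinAt
  filter_upwards [Ioi_mem_nhds hs0'] with s hs
  exact (heq s hs).symm

end AbelAux

open AbelAux in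
/-- Inversion formula for the generalized Abel integral equation of the first kind. -/
theorem abel_inversion
    (β : ℝ) (hβ0 : 0 < β) (hβ1 : β < 1)
    (F τ : ℝ → ℝ) (hF : ContDiff ℝ 1 F) (hτ : Continuous τ)
    (habel : ∀ t ∈ Icc (0:ℝ) 1, ∫ η in (0:ℝ)..t, τ η * (t - η) ^ (-β) = F t) :
    ∀ t ∈ Ioc (0:ℝ) 1,
      τ t = (Real.sin (β * π) / π) *
        (F 0 * t ^ (β - 1) + ∫ z in (0:ℝ)..t, deriv F z * (t - z) ^ (β - 1)) := by
  intro t ht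
  have hπ : (0:ℝ) < π := Real.pi_pos
  have hsin : 0 < Real.sin (π * β) := by
    apply Real.sin_pos_of_pos_of_lt_pi
    · positivity
    · nlinarith
  have key : ∀ s ∈ Ioc (0:ℝ) 1, (∫ η in (0:ℝ)..s, τ η)
      = (Real.sin (π * β) / π) *
          ∫ x in (0:ℝ)..s,
            (F 0 * x ^ (β - 1) + ∫ z in (0:ℝ)..x, deriv F z * (x - z) ^ (β - 1)) := by
    intro s hs
    have e1 := lemma1 hβ0 hβ1 hτ habel hs
    have e2 := lemma2 hβ0 hβ1 hF hs.1
    have e3 := lemma3 hβ0 hβ1 hF hs.1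
    have e4 : (π / Real.sin (π * β)) * (∫ η in (0:ℝ)..s, τ η)
        = ∫ x in (0:ℝ)..s,
            (F 0 * x ^ (β - 1) + ∫ z in (0:ℝ)..x, deriv F z * (x - z) ^ (β - 1)) := by
      rw [← e1, e2, ← e3]
    rw [← e4]
    field_simp
  have hHcont : ContinuousOn
      (fun s => F 0 * s ^ (β - 1) + ∫ z in (0:ℝ)..s, deriv F z * (s - z) ^ (β - 1))
      (Ioi (0:ℝ)) := by
    apply ContinuousOn.add
    · apply continuousOn_const.mul
      intro x hx
      exact (Real.continuousAt_rpow_const x (β - 1) (Or.inl (ne_of_gt hx))).continuousWithinAt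
    · exact J_cont hβ0 hβ1 hF
  have hHii : ∀ s : ℝ, 0 < s → IntervalIntegrable
      (fun x => F 0 * x ^ (β - 1) + ∫ z in (0:ℝ)..x, deriv F z * (x - z) ^ (β - 1))
      volume 0 s := by
    intro s hs
    apply IntervalIntegrable.add
    · exact (intervalIntegral.intervalIntegrable_rpow' (by linarith)).const_mul _
    · have hder : Continuous (deriv F) := hF.continuous_deriv le_rfl
      have hint := master_integrable (u := deriv F) (p := 0) (q := β - 1) hs
        (by norm_num) (by linarith) hder
      rw [intervalIntegrable_iff_integrableOn_Ioc_of_le hs.le]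
      refine (triangle_integrable hs
        (f := fun x z => deriv F z * ((s - x) ^ (0:ℝ) * (x - z) ^ (β - 1)))
        hint).congr_fun (fun x _ => ?_) measurableSet_Ioc
      exact intervalIntegral.integral_congr fun z _ => by rw [Real.rpow_zero, one_mul]
  have hmain : ∀ s ∈ Ioo (0:ℝ) 1, τ s = (Real.sin (π * β) / π) *
      (F 0 * s ^ (β - 1) + ∫ z in (0:ℝ)..s, deriv F z * (s - z) ^ (β - 1)) := by
    intro s hs
    have hd1 : HasDerivAt (fun x => ∫ η in (0:ℝ)..x, τ η) (τ s) s :=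
      intervalIntegral.integral_hasDerivAt_right (hτ.intervalIntegrable _ _)
        (ContinuousOn.stronglyMeasurableAtFilter isOpen_univ hτ.continuousOn s (mem_univ s))
        hτ.continuousAt
    have hd2 : HasDerivAt (fun x => (Real.sin (π * β) / π) *
        ∫ y in (0:ℝ)..x,
          (F 0 * y ^ (β - 1) + ∫ z in (0:ℝ)..y, deriv F z * (y - z) ^ (β - 1)))
        ((Real.sin (π * β) / π) *
          (F 0 * s ^ (β - 1) + ∫ z in (0:ℝ)..s, deriv F z * (s - z) ^ (β - 1))) s := by
      refine HasDerivAt.const_mul _ ?_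
      refine intervalIntegral.integral_hasDerivAt_right (hHii s hs.1) ?_ ?_
      · exact ContinuousOn.stronglyMeasurableAtFilter isOpen_Ioi hHcont s hs.1
      · exact hHcont.continuousAt (Ioi_mem_nhds hs.1)
    have heq2 : (fun x => ∫ η in (0:ℝ)..x, τ η) =ᶠ[nhds s]
        (fun x => (Real.sin (π * β) / π) *
          ∫ y in (0:ℝ)..x,
            (F 0 * y ^ (β - 1) + ∫ z in (0:ℝ)..y, deriv F z * (y - z) ^ (β - 1))) := by
      filter_upwards [Ioo_mem_nhds hs.1 hs.2] with x hx
      exact key x ⟨hx.1, hx.2.le⟩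
    exact hd1.unique (hd2.congr_of_eventuallyEq heq2)
  rcases lt_or_eq_of_le ht.2 with hlt | heq1
  · rw [mul_comm β π]
    exact hmain t ⟨ht.1, hlt⟩
  · subst heq1
    haveI hne : (nhdsWithin (1:ℝ) (Ioo (0:ℝ) 1)).NeBot := by
      rw [← mem_closure_iff_nhdsWithin_neBot, closure_Ioo (by norm_num : (0:ℝ) ≠ 1)]
      exact ⟨zero_le_one, le_refl 1⟩
    have hA : Filter.Tendsto τ (nhdsWithin (1:ℝ) (Ioo (0:ℝ) 1)) (nhds (τ 1)) :=
      hτ.continuousAt.tendsto.mono_left nhdsWithin_le_nhds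
    have hCH : ContinuousAt (fun x => (Real.sin (π * β) / π) *
        (F 0 * x ^ (β - 1) + ∫ z in (0:ℝ)..x, deriv F z * (x - z) ^ (β - 1))) 1 :=
      continuousAt_const.mul (hHcont.continuousAt (Ioi_mem_nhds one_pos))
    have hB : Filter.Tendsto (fun x => (Real.sin (π * β) / π) *
        (F 0 * x ^ (β - 1) + ∫ z in (0:ℝ)..x, deriv F z * (x - z) ^ (β - 1)))
        (nhdsWithin (1:ℝ) (Ioo (0:ℝ) 1))
        (nhds ((Real.sin (π * β) / π) *
          (F 0 * (1:ℝ) ^ (β - 1) + ∫ z in (0:ℝ)..(1:ℝ), deriv F z * (1 - z) ^ (β - 1)))) :=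
      hCH.tendsto.mono_left nhdsWithin_le_nhds
    have hB' : Filter.Tendsto τ (nhdsWithin (1:ℝ) (Ioo (0:ℝ) 1))
        (nhds ((Real.sin (π * β) / π) *
          (F 0 * (1:ℝ) ^ (β - 1) + ∫ z in (0:ℝ)..(1:ℝ), deriv F z * (1 - z) ^ (β - 1)))) := by
      refine Filter.Tendsto.congr' ?_ hB
      filter_upwards [self_mem_nhdsWithin] with x hx
      exact (hmain x hx).symm
    rw [mul_comm β π]
    exact tendsto_nhds_unique hA hB'
end
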